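/- Let R be a discrete valuation ring with completion R̂. If R̂ is ℵ₁-projective as an R-module (i.e., every countably generated submodule of R̂ is free), then R is complete, i.e., R = R̂. -/

import Mathlib

open IsLocalRing

/-- If the completion `R̂` of a discrete valuation ring `R` is ℵ₁-projective as an
`R`-module (every countably generated submodule is free), then `R` is complete. -/
theorem dvr_complete_of_completion_aleph1_projective
    (R : Type) [CommRing R] [IsDomain R] [IsDiscreteValuationRing R]
    (haleph : ∀ N : Submodule R (AdicCompletion (maximalIdeal R) R),
      (∃ S : Set (AdicCompletion (maximalIdeal R) R), S.Countable ∧ Submodule.span R S = N) →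
      Module.Free R ↥N) :
    IsAdicComplete (maximalIdeal R) R := by
  classical
  set I := maximalIdeal R with hIdef
  obtain ⟨π, hπ⟩ := IsDiscreteValuationRing.exists_irreducible R
  have hspan : I = Ideal.span {π} :=
    (IsDiscreteValuationRing.irreducible_iff_uniformizer π).mp hπ
  have hπ0 : π ≠ 0 := hπ.ne_zero
  have hsmul : ∀ n : ℕ, (I ^ n • ⊤ : Submodule R R) = I ^ n := fun n => by
    rw [smul_eq_mul, Ideal.mul_top]
  have hmem : ∀ (n : ℕ) (x : R), x ∈ (I ^ n • ⊤ : Submodule R R) ↔ π ^ n ∣ x := by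
    intro n x
    rw [hsmul, hspan, Ideal.span_singleton_pow, Ideal.mem_span_singleton]
  have hItop : I ≠ ⊤ := Ideal.IsMaximal.ne_top (maximalIdeal.isMaximal R)
  refine { toIsHausdorff := ?_, toIsPrecomplete := ?_ }
  · -- Hausdorff
    refine ⟨fun x hx => ?_⟩
    have hb : x ∈ (⊥ : Ideal R) := by
      rw [← Ideal.iInf_pow_eq_bot_of_isDomain I hItop]
      refine Submodule.mem_iInf _ |>.mpr fun n => ?_
      have := SModEq.sub_mem.mp (hx n)
      rw [sub_zero, hsmul] at this
      exact this
    exact Ideal.mem_bot.mp hb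
  · -- Precomplete
    refine ⟨fun f hf => ?_⟩
    have hdvd : ∀ m n : ℕ, m ≤ n → π ^ m ∣ f n - f m := by
      intro m n h
      have := SModEq.sub_mem.mp (hf h)
      rw [hmem] at this
      exact dvd_sub_comm.mp this
    have hex : ∀ n m : ℕ, ∃ r, f (n + m) - f n = π ^ n * r := fun n m =>
      hdvd n (n + m) (Nat.le_add_right n m)
    choose c hc using hex
    -- the elements x_n = (x - f n)/π^n of the completion
    have hcompat : ∀ n : ℕ, ∀ {m m' : ℕ} (h : m ≤ m'),
        AdicCompletion.transitionMap I R h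
          (Submodule.Quotient.mk (c n m')) = Submodule.Quotient.mk (c n m) := by
      intro n m m' h
      rw [show AdicCompletion.transitionMap I R h (Submodule.Quotient.mk (c n m')) =
        (Submodule.Quotient.mk (c n m') : R ⧸ (I ^ m • ⊤ : Submodule R R)) from rfl,
        Submodule.Quotient.eq, hmem]
      obtain ⟨e, he⟩ := hdvd (n + m) (n + m') (by omega)
      refine ⟨e, mul_left_cancel₀ (pow_ne_zero n hπ0) ?_⟩
      linear_combination -hc n m' + hc n m + he
    let xseq : ℕ → AdicCompletion I R := fun n =>
      ⟨fun m => Submodule.Quotient.mk (c n m), fun {m m'} h => hcompat n h⟩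
    -- key relation
    have hrel : ∀ n : ℕ, (π ^ n : R) • xseq n
        = xseq 0 + (f 0 - f n) • AdicCompletion.of I R 1 := by
      intro n
      refine AdicCompletion.ext fun m => ?_
      show (π ^ n : R) • (Submodule.Quotient.mk (c n m) : R ⧸ (I ^ m • ⊤ : Submodule R R))
        = Submodule.Quotient.mk (c 0 m) + (f 0 - f n) • Submodule.Quotient.mk 1
      rw [← Submodule.Quotient.mk_smul, ← Submodule.Quotient.mk_smul,
        ← Submodule.Quotient.mk_add, Submodule.Quotient.eq, hmem]
      obtain ⟨e, he⟩ := hdvd m (n + m) (Nat.le_add_left m n)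
      have h0 := hc 0 m
      rw [Nat.zero_add, pow_zero, one_mul] at h0
      refine ⟨e, ?_⟩
      simp only [smul_eq_mul, mul_one]
      linear_combination -hc n m + h0 + he
    -- the countably generated submodule
    set S : Set (AdicCompletion I R) := Set.range xseq ∪ {AdicCompletion.of I R 1} with hSdef
    have hS : S.Countable := (Set.countable_range xseq).union (Set.countable_singleton _)
    haveI hfree : Module.Free R ↥(Submodule.span R S) :=
      haleph (Submodule.span R S) ⟨S, hS, rfl⟩
    let b := Module.Free.chooseBasis R ↥(Submodule.span R S)
    have hmemS : ∀ n, xseq n ∈ Submodule.span R S := fun n =>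
      Submodule.subset_span (Or.inl ⟨n, rfl⟩)
    have h1S : AdicCompletion.of I R 1 ∈ Submodule.span R S :=
      Submodule.subset_span (Or.inr rfl)
    let y : ℕ → ↥(Submodule.span R S) := fun n => ⟨xseq n, hmemS n⟩
    let e1 : ↥(Submodule.span R S) := ⟨AdicCompletion.of I R 1, h1S⟩
    have hrelN : ∀ n : ℕ, (π ^ n : R) • y n = y 0 + (f 0 - f n) • e1 := fun n =>
      Subtype.ext (hrel n)
    have hcoord : ∀ (n : ℕ) i, π ^ n * b.repr (y n) i
        = b.repr (y 0) i + (f 0 - f n) * b.repr e1 i := by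
      intro n i
      have := congrArg (fun z => b.repr z i) (hrelN n)
      simpa [map_add, map_smul, Finsupp.add_apply, Finsupp.smul_apply, smul_eq_mul] using this
    -- some coordinate of 1 is a unit
    have hunit : ∃ j, IsUnit (b.repr e1 j) := by
      by_contra hcon
      push_neg at hcon
      have hmemI : ∀ i, b.repr e1 i ∈ I := fun i => hcon i
      have hIN : e1 ∈ (I • ⊤ : Submodule R ↥(Submodule.span R S)) := by
        have hsum : (b.repr e1).sum (fun i r => r • b i) = e1 := by
          rw [← Finsupp.linearCombination_apply, b.linearCombination_repr]
        rw [← hsum]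
        refine Submodule.sum_mem _ fun i _ => ?_
        exact Submodule.smul_mem_smul (hmemI i) Submodule.mem_top
      have h2 : AdicCompletion.of I R 1 ∈ (I • ⊤ : Submodule R (AdicCompletion I R)) := by
        have := Submodule.mem_map_of_mem (f := (Submodule.span R S).subtype) hIN
        rw [Submodule.map_smul''] at this
        exact Submodule.smul_mono le_rfl le_top this
      have h3 : (AdicCompletion.of I R 1).val 1
          ∈ (I • ⊤ : Submodule R (R ⧸ (I ^ 1 • ⊤ : Submodule R R))) := by
        have := Submodule.mem_map_of_mem (f := AdicCompletion.eval I R 1) h2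
        rw [Submodule.map_smul''] at this
        exact Submodule.smul_mono le_rfl le_top this
      have hbot : (I • ⊤ : Submodule R (R ⧸ (I ^ 1 • ⊤ : Submodule R R))) = ⊥ := by
        refine eq_bot_iff.mpr (Submodule.smul_le.mpr fun r hr x _ => ?_)
        obtain ⟨a, rfl⟩ := Submodule.mkQ_surjective _ x
        rw [Submodule.mem_bot, ← map_smul, Submodule.mkQ_apply,
          Submodule.Quotient.mk_eq_zero]
        simpa only [pow_one] using Submodule.smul_mem_smul hr Submodule.mem_top
      rw [hbot, Submodule.mem_bot] at h3
      have h4 : (1 : R) ∈ (I ^ 1 • ⊤ : Submodule R R) := by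
        rwa [← Submodule.Quotient.mk_eq_zero]
      rw [hmem, pow_one] at h4
      exact hπ.not_isUnit (isUnit_of_dvd_one h4)
    obtain ⟨j, hj⟩ := hunit
    set v : R := ↑hj.unit⁻¹ with hvdef
    have huv : v * b.repr e1 j = 1 := by
      rw [hvdef]
      calc (↑hj.unit⁻¹ : R) * b.repr e1 j = ↑hj.unit⁻¹ * ↑hj.unit := by rw [IsUnit.unit_spec]
      _ = 1 := hj.unit.inv_mul
    refine ⟨f 0 + b.repr (y 0) j * v, fun n => ?_⟩
    rw [SModEq.sub_mem, hmem]
    refine ⟨-(v * b.repr (y n) j), ?_⟩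
    linear_combination v * hcoord n j + (f 0 - f n) * huv
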